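/- The total number of fully linear transformations over $\mathbb{F}_{q^m}$, i.e., $\mathbb{F}_q$-linear automorphisms $\varphi$ of $\mathbb{F}_{q^m}$ such that $\varphi(\mathcal{C})$ is $\mathbb{F}_{q^m}$-linear for every $\mathbb{F}_{q^m}$-linear code $\mathcal{C}$, is exactly $m(q^m - 1)$. -/

import Mathlib

/-- An `𝔽_q`-linear automorphism `φ` of `𝔽_{q^m}` is *fully linear* if for every
`n`, the componentwise image of every `𝔽_{q^m}`-linear code in `𝔽_{q^m}ⁿ` is
again `𝔽_{q^m}`-linear. -/
def FullyLinear (Fq Fqm : Type) [Field Fq] [Field Fqm] [Algebra Fq Fqm]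
    (φ : Fqm ≃ₗ[Fq] Fqm) : Prop :=
  ∀ (n : ℕ) (C : Submodule Fqm (Fin n → Fqm)),
    ∃ D : Submodule Fqm (Fin n → Fqm),
      (fun v : Fin n → Fqm => fun i => φ (v i)) '' (C : Set (Fin n → Fqm)) = D

section Aux

variable {Fq Fqm : Type} [Field Fq] [Field Fqm] [Algebra Fq Fqm]

/-- multiplication by a unit as an `Fq`-linear equiv -/
def mulLeftEquiv (c : Fqmˣ) : Fqm ≃ₗ[Fq] Fqm where
  toFun x := c * x
  invFun x := (c⁻¹ : Fqmˣ) * x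
  map_add' := mul_add _
  map_smul' a x := Algebra.mul_smul_comm a _ x
  left_inv x := by field_simp; simp
  right_inv x := by field_simp; simp

/-- the candidate fully linear map from a unit and a Galois automorphism -/
def ofPair (c : Fqmˣ) (σ : Fqm ≃ₐ[Fq] Fqm) : Fqm ≃ₗ[Fq] Fqm :=
  σ.toLinearEquiv.trans (mulLeftEquiv c)

lemma ofPair_apply (c : Fqmˣ) (σ : Fqm ≃ₐ[Fq] Fqm) (x : Fqm) :
    ofPair c σ x = c * σ x := rfl

lemma fullyLinear_ofPair (c : Fqmˣ) (σ : Fqm ≃ₐ[Fq] Fqm) :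
    FullyLinear Fq Fqm (ofPair c σ) := by
  intro n C
  haveI : RingHomSurjective (σ : Fqm →+* Fqm) := ⟨σ.surjective⟩
  let f : (Fin n → Fqm) →ₛₗ[(σ : Fqm →+* Fqm)] (Fin n → Fqm) :=
    { toFun := fun v i => c * σ (v i)
      map_add' := by intro u v; funext i; simp [mul_add]
      map_smul' := by intro a v; funext i; simp [map_mul]; ring }
  refine ⟨C.map f, ?_⟩
  rw [Submodule.map_coe]
  rfl

lemma fullyLinear_key (φ : Fqm ≃ₗ[Fq] Fqm) (h : FullyLinear Fq Fqm φ) (x y : Fqm) :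
    φ 1 * φ (y * x) = φ y * φ x := by
  have h1 : φ 1 ≠ 0 := fun h0 => one_ne_zero (φ.injective (by simp [h0]))
  obtain ⟨D, hD⟩ := h 2 (Submodule.span Fqm {![1, x]})
  set v : Fin 2 → Fqm := ![1, x] with hv
  have hw1 : (fun i => φ (v i)) ∈ (D : Set (Fin 2 → Fqm)) := by
    rw [← hD]
    exact ⟨v, Submodule.mem_span_singleton_self v, rfl⟩
  have hw2 : (fun i => φ ((y • v) i)) ∈ (D : Set (Fin 2 → Fqm)) := by
    rw [← hD]
    exact ⟨y • v, Submodule.smul_mem _ y (Submodule.mem_span_singleton_self v), rfl⟩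
  set μ : Fqm := φ y * (φ 1)⁻¹ with hμ
  have hwD : ((fun i => φ ((y • v) i)) - μ • (fun i => φ (v i))) ∈ (D : Set (Fin 2 → Fqm)) :=
    D.sub_mem hw2 (D.smul_mem μ hw1)
  rw [← hD] at hwD
  obtain ⟨u, huC, hu⟩ := hwD
  obtain ⟨lam, hlam⟩ := Submodule.mem_span_singleton.mp huC
  subst hlam
  have h0 := congrFun hu 0
  have h1' := congrFun hu 1
  simp only [Pi.smul_apply, Pi.sub_apply, smul_eq_mul, hv, Matrix.cons_val_zero,
    Matrix.cons_val_one, Matrix.head_cons, mul_one] at h0 h1'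
  -- h0 : φ lam = φ y - μ * φ 1
  have hlam0 : lam = 0 := by
    have hz : φ y - μ * φ 1 = 0 := by rw [hμ]; field_simp; simp
    rw [hz] at h0
    have := φ.injective (by simpa using h0 : φ lam = φ 0)
    simpa using this
  rw [hlam0, zero_mul, map_zero] at h1'
  -- h1' : 0 = φ (y * x) - μ * φ x
  have hyx : φ (y * x) = μ * φ x := by linear_combination -h1'
  rw [hyx, hμ]
  field_simp

/-- the Galois automorphism attached to a fully linear map -/
def toAlgEquiv (φ : Fqm ≃ₗ[Fq] Fqm) (h : FullyLinear Fq Fqm φ) : Fqm ≃ₐ[Fq] Fqm where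
  toFun x := (φ 1)⁻¹ * φ x
  invFun y := φ.symm (φ 1 * y)
  left_inv x := by
    have h1 : φ 1 ≠ 0 := fun h0 => one_ne_zero (φ.injective (by simp [h0]))
    show φ.symm (φ 1 * ((φ 1)⁻¹ * φ x)) = x
    rw [← mul_assoc, mul_inv_cancel₀ h1, one_mul, φ.symm_apply_apply]
  right_inv y := by
    have h1 : φ 1 ≠ 0 := fun h0 => one_ne_zero (φ.injective (by simp [h0]))
    show (φ 1)⁻¹ * φ (φ.symm (φ 1 * y)) = y
    rw [φ.apply_symm_apply, ← mul_assoc, inv_mul_cancel₀ h1, one_mul]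
  map_mul' x y := by
    have h1 : φ 1 ≠ 0 := fun h0 => one_ne_zero (φ.injective (by simp [h0]))
    show (φ 1)⁻¹ * φ (x * y) = ((φ 1)⁻¹ * φ x) * ((φ 1)⁻¹ * φ y)
    have key := fullyLinear_key φ h y x
    field_simp
    linear_combination key
  map_add' x y := by
    show (φ 1)⁻¹ * φ (x + y) = (φ 1)⁻¹ * φ x + (φ 1)⁻¹ * φ y
    rw [map_add, mul_add]
  commutes' a := by
    have h1 : φ 1 ≠ 0 := fun h0 => one_ne_zero (φ.injective (by simp [h0]))
    show (φ 1)⁻¹ * φ (algebraMap Fq Fqm a) = algebraMap Fq Fqm a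
    have ha : (algebraMap Fq Fqm) a = a • (1 : Fqm) := by rw [Algebra.smul_def, mul_one]
    rw [ha, map_smul, Algebra.smul_def, Algebra.smul_def, mul_one]
    rw [mul_comm ((algebraMap Fq Fqm) a), ← mul_assoc, inv_mul_cancel₀ h1, one_mul]

lemma toAlgEquiv_apply (φ : Fqm ≃ₗ[Fq] Fqm) (h : FullyLinear Fq Fqm φ) (x : Fqm) :
    toAlgEquiv φ h x = (φ 1)⁻¹ * φ x := rfl

end Aux

/-- The total number of fully linear transformations over `𝔽_{q^m}` is
`m (q^m - 1)`. -/
theorem card_fullyLinear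
    (q m : ℕ) (hm : 0 < m) (Fq Fqm : Type) [Field Fq] [Fintype Fq] [Field Fqm]
    [Algebra Fq Fqm] (hq : Fintype.card Fq = q)
    (hrank : Module.finrank Fq Fqm = m) :
    Nat.card {φ : Fqm ≃ₗ[Fq] Fqm // FullyLinear Fq Fqm φ} = m * (q ^ m - 1) := by
  classical
  haveI : FiniteDimensional Fq Fqm := FiniteDimensional.of_finrank_pos (hrank ▸ hm)
  haveI : Finite Fqm := Module.finite_of_finite Fq
  haveI : Fintype Fqm := Fintype.ofFinite _
  have hbij : Function.Bijective
      (fun p : Fqmˣ × (Fqm ≃ₐ[Fq] Fqm) =>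
        (⟨ofPair p.1 p.2, fullyLinear_ofPair p.1 p.2⟩ :
          {φ : Fqm ≃ₗ[Fq] Fqm // FullyLinear Fq Fqm φ})) := by
    constructor
    · rintro ⟨c, σ⟩ ⟨c', σ'⟩ hcc
      simp only [Subtype.mk.injEq] at hcc
      have happ : ∀ x, (c : Fqm) * σ x = (c' : Fqm) * σ' x := fun x => by
        have := congrArg (fun ψ : Fqm ≃ₗ[Fq] Fqm => ψ x) hcc
        simpa [ofPair_apply] using this
      have hc : (c : Fqm) = c' := by simpa using happ 1
      have hσ : σ = σ' := by
        ext x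
        have := happ x
        rw [hc] at this
        exact mul_left_cancel₀ (Units.ne_zero c') this
      exact Prod.ext (Units.ext hc) hσ
    · rintro ⟨φ, hφ⟩
      have h1 : φ 1 ≠ 0 := fun h0 => one_ne_zero (φ.injective (by simp [h0]))
      refine ⟨(Units.mk0 (φ 1) h1, toAlgEquiv φ hφ), ?_⟩
      refine Subtype.ext ?_
      ext x
      rw [ofPair_apply, toAlgEquiv_apply]
      field_simp; rfl
  have hcard : Nat.card {φ : Fqm ≃ₗ[Fq] Fqm // FullyLinear Fq Fqm φ}
      = Nat.card (Fqmˣ × (Fqm ≃ₐ[Fq] Fqm)) :=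
    (Nat.card_eq_of_bijective _ hbij).symm
  rw [hcard, Nat.card_prod]
  have hu : Nat.card Fqmˣ = q ^ m - 1 := by
    rw [Nat.card_eq_fintype_card, Fintype.card_units, ← hq, ← hrank]
    rw [Module.card_eq_pow_finrank (K := Fq) (V := Fqm)]
  have hg : Nat.card (Fqm ≃ₐ[Fq] Fqm) = m := by
    rw [IsGalois.card_aut_eq_finrank, hrank]
  rw [hu, hg, mul_comm]
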